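/- Fix ε > 0. For each i with 1 ≤ i ≤ ⌊n/2⌋ and n > 2/ε, ℙ[ R_i(b) < ⌊n/2⌋(1 − e^{−1} − ε) ] ≤ exp( −(ε⌊n/2⌋ − 1)² / (2n) ). -/

import Mathlib

open Finset Real

lemma hoeffding_core (p : ℝ) (hp0 : 0 ≤ p) (hp1 : p ≤ 1) (h : ℝ) :
    (1 - p) * exp (-p * h) + p * exp ((1 - p) * h) ≤ exp (h ^ 2 / 8) := by
  set W : ℝ → ℝ := fun x => 1 - p + p * exp x with hWdef
  have hW : ∀ x, 0 < W x := by
    intro x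
    have := exp_pos x
    rcases eq_or_lt_of_le hp0 with h0 | h0
    · simp [hWdef, ← h0]
    · have : 0 < p * exp x := mul_pos h0 (exp_pos x)
      simp only [hWdef]; nlinarith
  set φ : ℝ → ℝ := fun x => Real.log (W x) - p * x - x ^ 2 / 8 with hφdef
  set φ' : ℝ → ℝ := fun x => p * exp x / W x - p - x / 4 with hφ'def
  have hWd : ∀ x, HasDerivAt W (p * exp x) x := by
    intro x
    have := (hasDerivAt_const x (1 - p)).add ((Real.hasDerivAt_exp x).const_mul p)
    rw [zero_add] at this
    exact this
  have hd1 : ∀ x, HasDerivAt φ (φ' x) x := by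
    intro x
    have h1 : HasDerivAt (fun x => Real.log (W x)) (p * exp x / W x) x :=
      (hWd x).log (hW x).ne'
    have h2 : HasDerivAt (fun x : ℝ => p * x) p x := by
      simpa using (hasDerivAt_id x).const_mul p
    have h3 : HasDerivAt (fun x : ℝ => x ^ 2 / 8) (x / 4) x := by
      have := (hasDerivAt_pow 2 x).div_const 8
      simpa using this.congr_deriv (by ring)
    exact (h1.sub h2).sub h3
  have hd2 : ∀ x, HasDerivAt φ'
      ((p * exp x * W x - p * exp x * (p * exp x)) / (W x) ^ 2 - 1 / 4) x := by
    intro x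
    have h1 : HasDerivAt (fun x => p * exp x / W x)
        ((p * exp x * W x - p * exp x * (p * exp x)) / (W x) ^ 2) x :=
      ((Real.hasDerivAt_exp x).const_mul p).div (hWd x) (hW x).ne'
    have h2 : HasDerivAt (fun x : ℝ => p + x / 4) (1 / 4) x := by
      have := (hasDerivAt_const x p).add ((hasDerivAt_id x).div_const 4)
      rw [zero_add] at this
      exact this
    exact (h1.sub h2).congr_of_eventuallyEq (Filter.Eventually.of_forall fun y => by
      simp only [hφ'def, Pi.sub_apply, Pi.add_apply]; ring)
  have hφ''_nonpos : ∀ x,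
      (p * exp x * W x - p * exp x * (p * exp x)) / (W x) ^ 2 - 1 / 4 ≤ 0 := by
    intro x
    have hw := hW x
    have hx0 : 0 ≤ p * exp x := mul_nonneg hp0 (exp_pos x).le
    have hxw : p * exp x ≤ W x := by
      simp only [hWdef]; nlinarith
    rw [sub_nonpos, div_le_iff₀ (by positivity)]
    set u := p * exp x with hu
    set w := W x with hw2
    clear_value u w
    nlinarith [sq_nonneg (w - 2 * u)]
  -- φ' is antitone
  have hanti : Antitone φ' := by
    apply antitone_of_deriv_nonpos
    · exact fun x => (hd2 x).differentiableAt
    · intro x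
      rw [(hd2 x).deriv]
      exact hφ''_nonpos x
  have hφ'0 : φ' 0 = 0 := by simp [hφ'def, hWdef]
  have hφ0 : φ 0 = 0 := by simp [hφdef, hWdef]
  -- φ ≤ 0
  have hφle : ∀ x, φ x ≤ 0 := by
    intro x
    rcases le_total 0 x with hx | hx
    · have : AntitoneOn φ (Set.Ici 0) := by
        apply antitoneOn_of_deriv_nonpos (convex_Ici 0)
        · exact Continuous.continuousOn (by
            have : ∀ x, HasDerivAt φ (φ' x) x := hd1
            exact (continuous_iff_continuousAt.mpr fun x => (hd1 x).continuousAt))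
        · intro y hy
          exact ((hd1 y).differentiableAt).differentiableWithinAt
        · intro y hy
          rw [(hd1 y).deriv]
          rw [← hφ'0]
          exact hanti (le_of_lt (by simpa using hy))
      have := this (Set.self_mem_Ici) (Set.mem_Ici.mpr hx) hx
      simpa [hφ0] using this
    · have : MonotoneOn φ (Set.Iic 0) := by
        apply monotoneOn_of_deriv_nonneg (convex_Iic 0)
        · exact (continuous_iff_continuousAt.mpr fun x => (hd1 x).continuousAt).continuousOn
        · intro y hy
          exact ((hd1 y).differentiableAt).differentiableWithinAt
        · intro y hy
          rw [(hd1 y).deriv]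
          rw [← hφ'0]
          exact hanti (le_of_lt (by simpa using hy))
      have := this (Set.mem_Iic.mpr hx) (Set.self_mem_Iic) hx
      simpa [hφ0] using this
  -- conclude
  have hlog : Real.log (W h) ≤ p * h + h ^ 2 / 8 := by
    have := hφle h
    simp only [hφdef] at this
    linarith
  have hWle : W h ≤ exp (p * h + h ^ 2 / 8) := by
    rw [← Real.exp_log (hW h)]
    exact exp_le_exp.mpr hlog
  have key : exp (-p * h) * W h ≤ exp (h ^ 2 / 8) := by
    calc exp (-p * h) * W h ≤ exp (-p * h) * exp (p * h + h ^ 2 / 8) := by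
          exact mul_le_mul_of_nonneg_left hWle (exp_pos _).le
      _ = exp (h ^ 2 / 8) := by rw [← exp_add]; ring_nf
  calc (1 - p) * exp (-p * h) + p * exp ((1 - p) * h)
      = exp (-p * h) * W h := by
        simp only [hWdef]
        rw [show (1 - p) * h = -p * h + h by ring, exp_add]
        ring
    _ ≤ exp (h ^ 2 / 8) := key

lemma hoeffding_fin {A : Type*} [Fintype A] [Nonempty A] (Y : A → ℝ)
    (hmean : ∑ a, Y a = 0) (hrange : ∀ a a', Y a - Y a' ≤ 2) (l : ℝ) :
    ∑ a, Real.exp (l * Y a) ≤ (Fintype.card A) * Real.exp (l ^ 2 / 2) := by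
  obtain ⟨a₀, -, hmin⟩ := Finset.exists_min_image univ Y univ_nonempty
  obtain ⟨a₁, -, hmax⟩ := Finset.exists_max_image univ Y univ_nonempty
  set α := Y a₀ with hα
  set β := Y a₁ with hβ
  have hmin' : ∀ a, α ≤ Y a := fun a => hmin a (mem_univ a)
  have hmax' : ∀ a, Y a ≤ β := fun a => hmax a (mem_univ a)
  have hcard : 0 < (Fintype.card A : ℝ) := by
    exact_mod_cast Fintype.card_pos
  have hαβ2 : β - α ≤ 2 := hrange a₁ a₀
  have hα0 : α ≤ 0 := by
    by_contra hc
    push_neg at hc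
    have : (0:ℝ) < ∑ a, Y a := by
      apply Finset.sum_pos (fun a _ => lt_of_lt_of_le hc (hmin' a)) univ_nonempty
    linarith [hmean ▸ this]
  have hβ0 : 0 ≤ β := by
    by_contra hc
    push_neg at hc
    have : ∑ a, Y a < 0 := by
      apply Finset.sum_neg (fun a _ => lt_of_le_of_lt (hmax' a) hc) univ_nonempty
    linarith [hmean ▸ this]
  have hexp1 : (1:ℝ) ≤ Real.exp (l ^ 2 / 2) := by
    apply Real.one_le_exp; positivity
  rcases eq_or_lt_of_le (le_trans hα0 hβ0 : α ≤ β) with heq | hlt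
  · -- degenerate: all Y a = 0
    have hz : ∀ a, Y a = 0 := by
      intro a
      have := hmin' a; have := hmax' a
      have hA : α = 0 := le_antisymm hα0 (heq ▸ hβ0)
      have hB : β = 0 := by rw [← heq]; exact hA
      linarith [hmin' a, hmax' a]
    calc ∑ a, Real.exp (l * Y a) = ∑ a : A, (1:ℝ) := by
          apply Finset.sum_congr rfl; intro a _; rw [hz a]; simp
      _ = (Fintype.card A : ℝ) := by simp
      _ ≤ (Fintype.card A) * Real.exp (l ^ 2 / 2) := by nlinarith
  · -- main case
    have hba : 0 < β - α := sub_pos.mpr hlt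
    set p : ℝ := -α / (β - α) with hp
    set hm : ℝ := l * (β - α) with hhm
    have hp0 : 0 ≤ p := div_nonneg (by linarith) hba.le
    have hp1 : p ≤ 1 := by
      rw [div_le_one hba]; linarith
    have hpw : ∀ a, Real.exp (l * Y a) ≤
        ((β - Y a) * Real.exp (l * α) + (Y a - α) * Real.exp (l * β)) / (β - α) := by
      intro a
      have wa : (0:ℝ) ≤ (β - Y a) / (β - α) := div_nonneg (by linarith [hmax' a]) hba.le
      have wb : (0:ℝ) ≤ (Y a - α) / (β - α) := div_nonneg (by linarith [hmin' a]) hba.le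
      have wab : (β - Y a) / (β - α) + (Y a - α) / (β - α) = 1 := by
        field_simp
        ring
      have := convexOn_exp.2 (Set.mem_univ (l * α)) (Set.mem_univ (l * β)) wa wb wab
      simp only [smul_eq_mul] at this
      have harg : (β - Y a) / (β - α) * (l * α) + (Y a - α) / (β - α) * (l * β) = l * Y a := by
        field_simp; ring
      rw [harg] at this
      calc Real.exp (l * Y a) ≤ (β - Y a) / (β - α) * Real.exp (l * α)
            + (Y a - α) / (β - α) * Real.exp (l * β) := this
        _ = ((β - Y a) * Real.exp (l * α) + (Y a - α) * Real.exp (l * β)) / (β - α) := by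
            ring
    have hsum : ∑ a, Real.exp (l * Y a) ≤
        (Fintype.card A : ℝ) * ((β * Real.exp (l * α) - α * Real.exp (l * β)) / (β - α)) := by
      calc ∑ a, Real.exp (l * Y a)
          ≤ ∑ a, ((β - Y a) * Real.exp (l * α) + (Y a - α) * Real.exp (l * β)) / (β - α) :=
            Finset.sum_le_sum (fun a _ => hpw a)
        _ = (Fintype.card A : ℝ) * ((β * Real.exp (l * α) - α * Real.exp (l * β)) / (β - α)) := by
            rw [← Finset.sum_div]
            rw [Finset.sum_add_distrib, ← Finset.sum_mul, ← Finset.sum_mul]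
            rw [Finset.sum_sub_distrib, Finset.sum_sub_distrib, hmean]
            simp [Finset.sum_const, Finset.card_univ]
            ring
    have hkey : (β * Real.exp (l * α) - α * Real.exp (l * β)) / (β - α)
        ≤ Real.exp (l ^ 2 / 2) := by
      have hrepr : (β * Real.exp (l * α) - α * Real.exp (l * β)) / (β - α)
          = (1 - p) * exp (-p * hm) + p * exp ((1 - p) * hm) := by
        have h1 : -p * hm = l * α := by
          rw [hp, hhm]; field_simp
        have h2 : (1 - p) * hm = l * β := by
          rw [hp, hhm]; field_simp; ring
        have h3 : (1 - p) = β / (β - α) := by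
          rw [hp]; field_simp
          ring
        rw [h1, h2, h3, hp]
        field_simp
        ring
      rw [hrepr]
      calc (1 - p) * exp (-p * hm) + p * exp ((1 - p) * hm)
          ≤ exp (hm ^ 2 / 8) := hoeffding_core p hp0 hp1 hm
        _ ≤ Real.exp (l ^ 2 / 2) := by
            apply Real.exp_le_exp.mpr
            rw [hhm]
            have h4 : (β - α) ^ 2 ≤ 4 := by nlinarith
            have := mul_le_mul_of_nonneg_left h4 (sq_nonneg l)
            nlinarith
    calc ∑ a, Real.exp (l * Y a)
        ≤ (Fintype.card A : ℝ) * ((β * Real.exp (l * α) - α * Real.exp (l * β)) / (β - α)) := hsum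
      _ ≤ (Fintype.card A) * Real.exp (l ^ 2 / 2) := by
          exact mul_le_mul_of_nonneg_left hkey hcard.le

lemma mgf_bound {A : Type*} [Fintype A] [Nonempty A] :
    ∀ (m : ℕ) (f : (Fin m → A) → ℝ),
    (∀ (k : Fin m) (x y : Fin m → A), (∀ j, j ≠ k → x j = y j) → f x - f y ≤ 2) →
    ∀ l : ℝ,
    ∑ x : Fin m → A,
        Real.exp (l * ((∑ z : Fin m → A, f z) / (Fintype.card A : ℝ) ^ m - f x))
      ≤ (Fintype.card A : ℝ) ^ m * Real.exp (m * l ^ 2 / 2) := by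
  intro m
  induction m with
  | zero =>
    intro f hf l
    have h1 : ∀ x : Fin 0 → A, x = (default : Fin 0 → A) := fun x => Subsingleton.elim _ _
    rw [Fintype.sum_unique, Fintype.sum_unique]
    simp
  | succ m ih =>
    intro f hf l
    set N : ℝ := (Fintype.card A : ℝ) with hN
    have hN0 : 0 < N := by rw [hN]; exact_mod_cast Fintype.card_pos
    set μ : ℝ := (∑ z : Fin (m+1) → A, f z) / N ^ (m+1) with hμ
    set g : A → ℝ := fun a => (∑ y : Fin m → A, f (Fin.cons a y)) / N ^ m with hg
    -- decompose sums with Fin.cons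
    have hsum_decomp : ∀ (F : (Fin (m+1) → A) → ℝ),
        ∑ x : Fin (m+1) → A, F x = ∑ a : A, ∑ y : Fin m → A, F (Fin.cons a y) := by
      intro F
      calc ∑ x : Fin (m+1) → A, F x
          = ∑ p : A × (Fin m → A), F (Fin.cons p.1 p.2) :=
            (Fintype.sum_equiv (Fin.consEquiv (fun _ : Fin (m+1) => A))
              (fun p => F (Fin.cons p.1 p.2)) F (fun p => by
                simp [Fin.consEquiv])).symm
        _ = ∑ a : A, ∑ y : Fin m → A, F (Fin.cons a y) :=
            Fintype.sum_prod_type (f := fun p : A × (Fin m → A) => F (Fin.cons p.1 p.2))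
    have hgsum : ∑ a : A, g a = N * μ := by
      simp only [hg]
      rw [← Finset.sum_div, hμ, hsum_decomp f, pow_succ]
      field_simp
    have hfa_bd : ∀ a : A, ∀ (k : Fin m) (y y' : Fin m → A),
        (∀ j, j ≠ k → y j = y' j) → f (Fin.cons a y) - f (Fin.cons a y') ≤ 2 := by
      intro a k y y' hyy
      apply hf k.succ
      intro j hj
      rcases Fin.eq_zero_or_eq_succ j with rfl | ⟨j', rfl⟩
      · simp
      · simp only [Fin.cons_succ]
        exact hyy j' (fun hc => hj (by rw [hc]))
    have hIH : ∀ a : A,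
        ∑ y : Fin m → A, Real.exp (l * (g a - f (Fin.cons a y)))
          ≤ N ^ m * Real.exp (m * l ^ 2 / 2) := by
      intro a
      have := ih (fun y => f (Fin.cons a y)) (hfa_bd a) l
      simpa [hg] using this
    have hgrange : ∀ a a', g a - g a' ≤ 2 := by
      intro a a'
      simp only [hg]
      rw [div_sub_div_same]
      rw [div_le_iff₀ (by positivity)]
      rw [← Finset.sum_sub_distrib]
      calc ∑ y : Fin m → A, (f (Fin.cons a y) - f (Fin.cons a' y))
          ≤ ∑ _y : Fin m → A, (2:ℝ) := by
            apply Finset.sum_le_sum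
            intro y _
            apply hf 0
            intro j hj
            rcases Fin.eq_zero_or_eq_succ j with rfl | ⟨j', rfl⟩
            · exact absurd rfl hj
            · simp
        _ = 2 * N ^ m := by
            rw [Finset.sum_const, Finset.card_univ]
            simp [hN, Fintype.card_fun]
            ring
    have key : ∀ a : A, ∑ y : Fin m → A, Real.exp (l * (μ - f (Fin.cons a y)))
        = Real.exp (l * (μ - g a)) * ∑ y, Real.exp (l * (g a - f (Fin.cons a y))) := by
      intro a
      rw [Finset.mul_sum]
      apply Finset.sum_congr rfl
      intro y _
      rw [← Real.exp_add]
      congr 1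
      ring
    calc ∑ x : Fin (m+1) → A, Real.exp (l * (μ - f x))
        = ∑ a : A, ∑ y, Real.exp (l * (μ - f (Fin.cons a y))) := hsum_decomp _
      _ = ∑ a : A, Real.exp (l * (μ - g a)) * ∑ y, Real.exp (l * (g a - f (Fin.cons a y))) :=
          Finset.sum_congr rfl (fun a _ => key a)
      _ ≤ ∑ a : A, Real.exp (l * (μ - g a)) * (N ^ m * Real.exp (m * l ^ 2 / 2)) := by
          apply Finset.sum_le_sum
          intro a _
          exact mul_le_mul_of_nonneg_left (hIH a) (Real.exp_pos _).le
      _ = (N ^ m * Real.exp (m * l ^ 2 / 2)) * ∑ a : A, Real.exp (l * (μ - g a)) := by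
          rw [← Finset.sum_mul]; ring
      _ ≤ (N ^ m * Real.exp (m * l ^ 2 / 2)) * (N * Real.exp (l ^ 2 / 2)) := by
          apply mul_le_mul_of_nonneg_left _ (by positivity)
          have hmean0 : ∑ a : A, (μ - g a) = 0 := by
            rw [Finset.sum_sub_distrib, hgsum, Finset.sum_const, Finset.card_univ]
            rw [nsmul_eq_mul, ← hN]
            ring
          have hrange0 : ∀ a a', (μ - g a) - (μ - g a') ≤ 2 := by
            intro a a'; have := hgrange a' a; linarith
          have := hoeffding_fin (fun a => μ - g a) hmean0 hrange0 l
          simpa [hN] using this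
      _ = N ^ (m+1) * Real.exp ((↑(m+1) : ℝ) * l ^ 2 / 2) := by
          have hc : ((↑(m+1) : ℝ)) * l ^ 2 / 2 = (m:ℝ) * l ^ 2 / 2 + l ^ 2 / 2 := by
            push_cast; ring
          rw [hc, Real.exp_add, pow_succ]
          ring

lemma mcdiarmid_tail {A : Type*} [Fintype A] [Nonempty A] (m : ℕ) (hm : 0 < m)
    (f : (Fin m → A) → ℝ)
    (hf : ∀ (k : Fin m) (x y : Fin m → A), (∀ j, j ≠ k → x j = y j) → f x - f y ≤ 2)
    (s : ℝ) (hs : 0 ≤ s) :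
    ((univ.filter (fun x : Fin m → A =>
        f x ≤ (∑ z : Fin m → A, f z) / (Fintype.card A : ℝ) ^ m - s)).card : ℝ)
      ≤ (Fintype.card A : ℝ) ^ m * Real.exp (-s ^ 2 / (2 * m)) := by
  set N : ℝ := (Fintype.card A : ℝ) with hN
  have hN0 : 0 < N := by rw [hN]; exact_mod_cast Fintype.card_pos
  set μ : ℝ := (∑ z : Fin m → A, f z) / N ^ m with hμ
  set l : ℝ := s / m with hl
  have hm0 : (0:ℝ) < m := by exact_mod_cast hm
  have hl0 : 0 ≤ l := div_nonneg hs hm0.le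
  set E := univ.filter (fun x : Fin m → A => f x ≤ μ - s) with hE
  have h1 : (E.card : ℝ) * Real.exp (l * s) ≤ ∑ x ∈ E, Real.exp (l * (μ - f x)) := by
    rw [← nsmul_eq_mul]
    apply Finset.card_nsmul_le_sum
    intro x hx
    rw [hE, Finset.mem_filter] at hx
    apply Real.exp_le_exp.mpr
    have : s ≤ μ - f x := by linarith [hx.2]
    nlinarith
  have h2 : ∑ x ∈ E, Real.exp (l * (μ - f x)) ≤ ∑ x : Fin m → A, Real.exp (l * (μ - f x)) :=
    Finset.sum_le_sum_of_subset_of_nonneg (Finset.filter_subset _ _)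
      (fun x _ _ => (Real.exp_pos _).le)
  have h3 := mgf_bound m f hf l
  have h4 : (E.card : ℝ) * Real.exp (l * s) ≤ N ^ m * Real.exp (m * l ^ 2 / 2) :=
    le_trans h1 (le_trans h2 h3)
  have h5 : (E.card : ℝ) ≤ N ^ m * Real.exp (m * l ^ 2 / 2) / Real.exp (l * s) := by
    rw [le_div_iff₀ (Real.exp_pos _)]
    exact h4
  calc (E.card : ℝ) ≤ N ^ m * Real.exp (m * l ^ 2 / 2) / Real.exp (l * s) := h5
    _ = N ^ m * Real.exp (m * l ^ 2 / 2 - l * s) := by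
        rw [Real.exp_sub]; ring
    _ = N ^ m * Real.exp (-s ^ 2 / (2 * m)) := by
        congr 1
        rw [hl]
        field_simp
        ring

lemma chain_count {A : Type*} [Fintype A] [DecidableEq A] (F : A → Finset A)
    (hF : ∀ a, 2 ≤ (F a).card) :
    ∀ L : ℕ,
    ((univ.filter (fun f : Fin (L+1) → A =>
        ∀ t : Fin L, f t.succ ∉ F (f t.castSucc))).card)
      ≤ Fintype.card A * (Fintype.card A - 2) ^ L := by
  intro L
  induction L with
  | zero =>
    have h1 : (univ.filter (fun f : Fin 1 → A =>
        ∀ t : Fin 0, f t.succ ∉ F (f t.castSucc))) = univ :=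
      filter_true_of_mem (fun x _ => fun t => t.elim0)
    rw [h1, card_univ]
    simp [Fintype.card_fun]
  | succ L ih =>
    set B := univ.filter (fun g : Fin (L+1) → A =>
      ∀ t : Fin L, g t.succ ∉ F (g t.castSucc)) with hB
    set S := B.sigma (fun g => univ.filter (fun a => a ∉ F (g (Fin.last L)))) with hS
    have hinj : ((univ.filter (fun f : Fin (L+2) → A =>
        ∀ t : Fin (L+1), f t.succ ∉ F (f t.castSucc))).card) ≤ S.card := by
      apply Finset.card_le_card_of_injOn
        (fun x => ⟨Fin.init x, x (Fin.last (L+1))⟩)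
      · intro x hx
        rw [Finset.mem_coe, Finset.mem_filter] at hx
        have hx2 := hx.2
        rw [Finset.mem_coe, hS, Finset.mem_sigma]
        constructor
        · rw [hB, Finset.mem_filter]
          refine ⟨mem_univ _, fun t => ?_⟩
          have := hx2 t.castSucc
          simp only [Fin.init]
          rwa [Fin.succ_castSucc] at this
        · rw [Finset.mem_filter]
          refine ⟨mem_univ _, ?_⟩
          have := hx2 (Fin.last L)
          rw [Fin.succ_last] at this
          simpa [Fin.init] using this
      · intro x hx y hy hxy
        simp only [Sigma.mk.inj_iff, heq_eq_eq] at hxy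
        rw [← Fin.snoc_init_self x, ← Fin.snoc_init_self y, hxy.1, hxy.2]
    have hcard : S.card ≤ B.card * (Fintype.card A - 2) := by
      rw [hS, Finset.card_sigma]
      calc ∑ g ∈ B, (univ.filter (fun a => a ∉ F (g (Fin.last L)))).card
          ≤ ∑ _g ∈ B, (Fintype.card A - 2) := by
            apply Finset.sum_le_sum
            intro g _
            have h1 : univ.filter (fun a => a ∉ F (g (Fin.last L)))
                = univ \ F (g (Fin.last L)) := by
              ext a; simp
            rw [h1, Finset.card_sdiff_of_subset (subset_univ _), card_univ]
            exact Nat.sub_le_sub_left (hF _) _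
        _ = B.card * (Fintype.card A - 2) := by
            rw [Finset.sum_const, smul_eq_mul]
    calc ((univ.filter (fun f : Fin (L+2) → A =>
            ∀ t : Fin (L+1), f t.succ ∉ F (f t.castSucc))).card)
        ≤ S.card := hinj
      _ ≤ B.card * (Fintype.card A - 2) := hcard
      _ ≤ (Fintype.card A * (Fintype.card A - 2) ^ L) * (Fintype.card A - 2) :=
          Nat.mul_le_mul_right _ ih
      _ = Fintype.card A * (Fintype.card A - 2) ^ (L+1) := by ring


/-- The `n`-cyclic absolute value of `d ∈ ℤ_n`. -/
def cycAbs (n : ℕ) (d : ZMod n) : ℕ := min d.val (-d).val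

/-- The entry `T_b(i,j) = |b(j) − b(j+i)|_n` of the matrix `T_b`. -/
def Tb (n : ℕ) (b : ZMod n → ZMod n) (i : ℕ) (j : ZMod n) : ℕ :=
  cycAbs n (b j - b (j + (i : ZMod n)))

/-- `R_i(b)`: the number of distinct values among the entries of row `i` of `T_b`. -/
def Rrow (n : ℕ) [NeZero n] (b : ZMod n → ZMod n) (i : ℕ) : ℕ :=
  (Finset.univ.image (fun j : ZMod n => Tb n b i j)).card

-- the bijection Fin g × Fin L ≃ ZMod n
lemma cyc_bij (n i : ℕ) [NeZero n] (hi1 : 1 ≤ i) (K : ℕ)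
    (hK : Nat.gcd i n * (K + 1) = n) :
    Function.Bijective (fun p : Fin (Nat.gcd i n) × Fin (K+1) =>
      ((p.1 + p.2 * i : ℕ) : ZMod n)) := by
  set g := Nat.gcd i n with hg
  have hn0 : n ≠ 0 := NeZero.ne n
  have hg0 : 0 < g := Nat.gcd_pos_of_pos_left n hi1
  have hgi : g ∣ i := Nat.gcd_dvd_left i n
  have hgn : g ∣ n := Nat.gcd_dvd_right i n
  obtain ⟨i', hi'⟩ := id hgi
  have hcop : Nat.Coprime i' (K+1) := by
    have h1 : i / g = i' := by rw [hi']; exact Nat.mul_div_cancel_left i' hg0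
    have h2 : n / g = K + 1 := by rw [← hK]; exact (Nat.mul_div_cancel_left _ hg0)
    rw [← h1, ← h2]
    exact Nat.coprime_div_gcd_div_gcd hg0
  rw [Fintype.bijective_iff_injective_and_card]
  constructor
  · rintro ⟨c₁, t₁⟩ ⟨c₂, t₂⟩ hE
    simp only [ZMod.natCast_eq_natCast_iff] at hE
    -- first: c₁ = c₂ mod g
    have hmodg : (c₁ : ℕ) ≡ c₂ [MOD g] := by
      have h1 : ((c₁ : ℕ) + t₁ * i) ≡ ((c₂ : ℕ) + t₂ * i) [MOD g] := hE.of_dvd hgn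
      have h2 : ((t₁ : ℕ) * i) ≡ 0 [MOD g] :=
        (Nat.modEq_zero_iff_dvd).mpr (Dvd.dvd.mul_left hgi _)
      have h3 : ((t₂ : ℕ) * i) ≡ 0 [MOD g] :=
        (Nat.modEq_zero_iff_dvd).mpr (Dvd.dvd.mul_left hgi _)
      calc (c₁ : ℕ) ≡ (c₁ : ℕ) + t₁ * i [MOD g] := by
            simpa using (Nat.ModEq.refl (c₁ : ℕ)).add h2.symm
        _ ≡ (c₂ : ℕ) + t₂ * i [MOD g] := h1
        _ ≡ c₂ [MOD g] := by simpa using (Nat.ModEq.refl (c₂ : ℕ)).add h3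
    have hc : (c₁ : ℕ) = c₂ := by
      have := hmodg
      unfold Nat.ModEq at this
      rwa [Nat.mod_eq_of_lt c₁.isLt, Nat.mod_eq_of_lt c₂.isLt] at this
    -- now cancel c and deduce t₁ = t₂
    have hE2 : ((t₁ : ℕ) * i) ≡ ((t₂ : ℕ) * i) [MOD n] := by
      have := hE
      rw [hc] at this
      exact (Nat.ModEq.add_left_cancel' _ this)
    have hdvd : (n : ℤ) ∣ ((t₂ : ℕ) : ℤ) * i - ((t₁ : ℕ) : ℤ) * i := by
      have := hE2.dvd
      push_cast at this ⊢
      convert this using 1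
    have ht : (t₁ : ℕ) = t₂ := by
      have hdvd2 : ((K:ℤ) + 1) ∣ (((t₂ : ℕ) : ℤ) - ((t₁ : ℕ) : ℤ)) * i' := by
        have hgz : (g : ℤ) ≠ 0 := by exact_mod_cast hg0.ne'
        apply (mul_dvd_mul_iff_left hgz).mp
        have : (g : ℤ) * ((K:ℤ)+1) = (n : ℤ) := by exact_mod_cast hK
        rw [this]
        have : (((t₂ : ℕ) : ℤ) * i - ((t₁ : ℕ) : ℤ) * i)
            = (g:ℤ) * ((((t₂ : ℕ) : ℤ) - ((t₁ : ℕ) : ℤ)) * i') := by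
          have : (i : ℤ) = (g : ℤ) * (i' : ℤ) := by exact_mod_cast hi'
          rw [this]; ring
        rw [← this]
        exact hdvd
      have hcop' : IsCoprime ((K:ℤ)+1) ((i' : ℕ) : ℤ) := by
        rw [Int.isCoprime_iff_gcd_eq_one]
        have : ((K:ℤ)+1) = ((K+1 : ℕ) : ℤ) := by push_cast; ring
        rw [this, Int.gcd_natCast_natCast]
        exact (Nat.coprime_comm.mp hcop)
      have hdvd3 : ((K:ℤ) + 1) ∣ (((t₂ : ℕ) : ℤ) - ((t₁ : ℕ) : ℤ)) :=
        hcop'.dvd_of_dvd_mul_right hdvd2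
      have habs : |(((t₂ : ℕ) : ℤ) - ((t₁ : ℕ) : ℤ))| < (K:ℤ) + 1 := by
        have h1 : ((t₁:ℕ) : ℤ) < (K:ℤ) + 1 := by exact_mod_cast t₁.isLt
        have h2 : ((t₂:ℕ) : ℤ) < (K:ℤ) + 1 := by exact_mod_cast t₂.isLt
        rw [abs_sub_lt_iff]
        constructor <;> [skip; skip] <;> 
          · have : (0:ℤ) ≤ ((t₁:ℕ):ℤ) := Int.natCast_nonneg _
            have : (0:ℤ) ≤ ((t₂:ℕ):ℤ) := Int.natCast_nonneg _
            omega
      have := Int.eq_zero_of_abs_lt_dvd hdvd3 habs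
      omega
    exact Prod.ext (Fin.ext hc) (Fin.ext ht)
  · simp only [Fintype.card_prod, Fintype.card_fin, ZMod.card]
    exact hK

lemma cycAbs_vals (n v : ℕ) [NeZero n] (hv1 : 1 ≤ v) (hv2 : 2 * v < n) :
    cycAbs n ((v : ZMod n)) = v ∧ cycAbs n (-(v : ZMod n)) = v := by
  have hvlt : v < n := by omega
  have h1 : ((v:ℕ) : ZMod n).val = v := ZMod.val_cast_of_lt hvlt
  have hne : ((v:ℕ) : ZMod n) ≠ 0 := by
    intro h
    rw [ZMod.natCast_eq_zero_iff] at h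
    have := Nat.le_of_dvd (by omega) h
    omega
  have h2 : (-(v : ZMod n)).val = n - v := by
    rw [ZMod.neg_val]
    simp [hne, h1]
  constructor
  · unfold cycAbs
    rw [h1, h2]
    omega
  · unfold cycAbs
    rw [neg_neg, h1, h2]
    omega

lemma badv_count (n i v : ℕ) [NeZero n] (hi1 : 1 ≤ i) (h2g : 2 * Nat.gcd i n ≤ n)
    (hv1 : 1 ≤ v) (hv2 : 2 * v < n) :
    ((univ.filter (fun b : ZMod n → ZMod n => ∀ j : ZMod n, Tb n b i j ≠ v)).card)
      ≤ n ^ (Nat.gcd i n) * (n - 2) ^ (n - Nat.gcd i n) := by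
  set g := Nat.gcd i n with hg
  have hg0 : 0 < g := Nat.gcd_pos_of_pos_left n hi1
  have hgn : g ∣ n := Nat.gcd_dvd_right i n
  have hn0 : 0 < n := Nat.pos_of_ne_zero (NeZero.ne n)
  obtain ⟨K, hK⟩ : ∃ K, n / g = K + 1 := by
    have : 0 < n / g := Nat.div_pos (Nat.le_of_dvd hn0 hgn) hg0
    exact ⟨n / g - 1, by omega⟩
  have hgK : g * (K+1) = n := by rw [← hK]; exact Nat.mul_div_cancel' hgn
  set F : ZMod n → Finset (ZMod n) := fun a => {a - (v:ZMod n), a + (v:ZMod n)} with hF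
  have hFcard : ∀ a, 2 ≤ (F a).card := by
    intro a
    rw [hF]
    simp only
    rw [Finset.card_insert_of_notMem, Finset.card_singleton]
    simp only [Finset.mem_singleton]
    intro h
    have h2 : (v : ZMod n) + (v : ZMod n) = 0 := by
      linear_combination -h
    have h4 : ((v + v : ℕ) : ZMod n) = 0 := by push_cast; exact h2
    rw [ZMod.natCast_eq_zero_iff] at h4
    have := Nat.le_of_dvd (by omega) h4
    omega
  have hcyc := cycAbs_vals n v hv1 hv2
  have hTb_key : ∀ (b : ZMod n → ZMod n) (j : ZMod n),
      Tb n b i j ≠ v → b (j + (i:ZMod n)) ∉ F (b j) := by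
    intro b j hTb hmem
    rw [hF] at hmem
    simp only [Finset.mem_insert, Finset.mem_singleton] at hmem
    apply hTb
    unfold Tb
    rcases hmem with h | h
    · rw [h, show b j - (b j - (v:ZMod n)) = (v:ZMod n) by ring]
      exact hcyc.1
    · rw [h, show b j - (b j + (v:ZMod n)) = -(v:ZMod n) by ring]
      exact hcyc.2
  have hEbij := cyc_bij n i hi1 K hgK
  set E : Fin g × Fin (K+1) → ZMod n :=
    (fun p : Fin g × Fin (K+1) => ((p.1 + p.2 * i : ℕ) : ZMod n)) with hE
  set ChainSet : Finset (Fin (K+1) → ZMod n) :=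
    univ.filter (fun f => ∀ t : Fin K, f t.succ ∉ F (f t.castSucc)) with hCS
  have hmain : ((univ.filter
      (fun b : ZMod n → ZMod n => ∀ j : ZMod n, Tb n b i j ≠ v)).card)
      ≤ (Fintype.piFinset (fun _ : Fin g => ChainSet)).card := by
    apply Finset.card_le_card_of_injOn (fun b => fun c t => b (E (c, t)))
    · intro b hb
      rw [Finset.mem_coe, Finset.mem_filter] at hb
      rw [Finset.mem_coe, Fintype.mem_piFinset]
      intro c
      rw [hCS, Finset.mem_filter]
      refine ⟨Finset.mem_univ _, fun t => ?_⟩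
      show b (E (c, t.succ)) ∉ F (b (E (c, t.castSucc)))
      have hstep : E (c, t.succ) = E (c, t.castSucc) + (i : ZMod n) := by
        rw [hE]
        simp only [Fin.val_succ, Fin.coe_castSucc]
        push_cast
        ring
      rw [hstep]
      exact hTb_key b (E (c, t.castSucc)) (hb.2 _)
    · intro b hb b' hb' hbb
      funext j
      obtain ⟨p, rfl⟩ := hEbij.2 j
      have := congrFun (congrFun hbb p.1) p.2
      simpa using this
  have hcs_card : ChainSet.card ≤ n * (n - 2) ^ K := by
    have := chain_count F hFcard K
    rwa [ZMod.card] at this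
  calc ((univ.filter
      (fun b : ZMod n → ZMod n => ∀ j : ZMod n, Tb n b i j ≠ v)).card)
      ≤ (Fintype.piFinset (fun _ : Fin g => ChainSet)).card := hmain
    _ = ChainSet.card ^ g := by
        rw [Fintype.card_piFinset]
        rw [Finset.prod_const, Finset.card_univ, Fintype.card_fin]
    _ ≤ (n * (n - 2) ^ K) ^ g := Nat.pow_le_pow_left hcs_card g
    _ = n ^ g * (n - 2) ^ (n - g) := by
        have h' : K * g + g = n := by rw [← hgK]; ring
        rw [mul_pow, ← pow_mul]
        congr 2
        omega

lemma Rrow_sum_lb (n i : ℕ) [NeZero n] (hi1 : 1 ≤ i) (hi2 : i ≤ n / 2) :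
    (((n/2 : ℕ) : ℝ) - 1) * ((n:ℝ)^n * (1 - Real.exp (-1)))
      ≤ ∑ b : ZMod n → ZMod n, (Rrow n b i : ℝ) := by
  have hn0 : 0 < n := Nat.pos_of_ne_zero (NeZero.ne n)
  have hn2 : 2 ≤ n := by
    rcases Nat.lt_or_ge n 2 with h | h
    · interval_cases n <;> omega
    · exact h
  have hm1 : 1 ≤ n / 2 := le_trans hi1 hi2
  set g := Nat.gcd i n with hg
  have hgi : g ≤ i := Nat.gcd_le_left n hi1
  have h2g : 2 * g ≤ n := by
    have h1 : g ≤ n / 2 := le_trans hgi hi2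
    omega
  set goodV := Finset.Ico 1 ((n+1)/2) with hgoodV
  -- number of functions
  have hcardΩ : Fintype.card (ZMod n → ZMod n) = n ^ n := by
    rw [Fintype.card_fun, ZMod.card]
  set Bd := n ^ g * (n - 2) ^ (n - g) with hBd
  -- ℕ-level bound on the sum
  have hnat : goodV.card * (n ^ n - Bd) ≤ ∑ b : ZMod n → ZMod n, Rrow n b i := by
    have hpt : ∀ b : ZMod n → ZMod n,
        (goodV.filter (fun v => ∃ j, Tb n b i j = v)).card ≤ Rrow n b i := by
      intro b
      apply Finset.card_le_card
      intro v hv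
      rw [Finset.mem_filter] at hv
      obtain ⟨j, hj⟩ := hv.2
      exact Finset.mem_image.mpr ⟨j, Finset.mem_univ _, hj⟩
    calc goodV.card * (n ^ n - Bd)
        = ∑ _v ∈ goodV, (n ^ n - Bd) := by rw [Finset.sum_const, smul_eq_mul]
      _ ≤ ∑ v ∈ goodV,
            (univ.filter (fun b : ZMod n → ZMod n => ∃ j, Tb n b i j = v)).card := by
          apply Finset.sum_le_sum
          intro v hv
          rw [hgoodV, Finset.mem_Ico] at hv
          have hv1 : 1 ≤ v := hv.1
          have hv2 : 2 * v < n := by omega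
          have hbad := badv_count n i v hi1 h2g hv1 hv2
          simp only [← hg] at hbad
          rw [← hBd] at hbad
          have hsplit : (univ.filter (fun b : ZMod n → ZMod n => ∃ j, Tb n b i j = v)).card
              + (univ.filter (fun b : ZMod n → ZMod n => ∀ j, Tb n b i j ≠ v)).card
              = n ^ n := by
            have heq : (univ.filter (fun b : ZMod n → ZMod n => ¬ ∃ j, Tb n b i j = v))
                = univ.filter (fun b : ZMod n → ZMod n => ∀ j, Tb n b i j ≠ v) := by
              apply Finset.filter_congr
              intro b _
              simp [not_exists]
            rw [← heq,
              Finset.card_filter_add_card_filter_not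
                (p := fun b : ZMod n → ZMod n => ∃ j, Tb n b i j = v),
              Finset.card_univ, hcardΩ]
          omega
      _ = ∑ v ∈ goodV, ∑ b : ZMod n → ZMod n, (if ∃ j, Tb n b i j = v then 1 else 0) := by
          apply Finset.sum_congr rfl
          intro v _
          rw [Finset.card_filter]
      _ = ∑ b : ZMod n → ZMod n, ∑ v ∈ goodV, (if ∃ j, Tb n b i j = v then 1 else 0) :=
          Finset.sum_comm
      _ = ∑ b : ZMod n → ZMod n, (goodV.filter (fun v => ∃ j, Tb n b i j = v)).card := by
          apply Finset.sum_congr rfl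
          intro b _
          rw [Finset.card_filter]
      _ ≤ ∑ b : ZMod n → ZMod n, Rrow n b i := Finset.sum_le_sum (fun b _ => hpt b)
  -- real-number facts
  have hBd_le : Bd ≤ n ^ n := by
    rw [hBd]
    calc n ^ g * (n - 2) ^ (n - g) ≤ n ^ g * n ^ (n - g) := by
          apply Nat.mul_le_mul_left
          apply Nat.pow_le_pow_left
          omega
      _ = n ^ n := by
          rw [← pow_add]
          congr 1
          have : g ≤ n := Nat.le_of_dvd hn0 (Nat.gcd_dvd_right i n)
          omega
  have hnR : (0:ℝ) < n := by exact_mod_cast hn0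
  have hgn' : g ≤ n := Nat.le_of_dvd hn0 (Nat.gcd_dvd_right i n)
  have hBd_real : (Bd : ℝ) ≤ Real.exp (-1) * (n:ℝ) ^ n := by
    have h1 : ((n:ℝ) - 2) ≤ (n:ℝ) * Real.exp (-2 / n) := by
      have h0 := Real.add_one_le_exp (-2 / (n:ℝ))
      have h2 : (-2/(n:ℝ) + 1) * n ≤ Real.exp (-2/n) * n :=
        mul_le_mul_of_nonneg_right h0 hnR.le
      calc ((n:ℝ) - 2) = (-2/(n:ℝ) + 1) * n := by field_simp; ring
        _ ≤ Real.exp (-2/n) * n := h2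
        _ = (n:ℝ) * Real.exp (-2/n) := by ring
    have hcast : ((n - 2 : ℕ) : ℝ) = (n:ℝ) - 2 := by
      rw [Nat.cast_sub hn2]; norm_num
    have hexp_le : Real.exp (-2/(n:ℝ)) ^ (n - g) ≤ Real.exp (-1) := by
      rw [← Real.exp_nat_mul]
      apply Real.exp_le_exp.mpr
      have hng : n ≤ 2 * (n - g) := by omega
      have hngR : (n:ℝ) ≤ 2 * ((n - g : ℕ) : ℝ) := by exact_mod_cast hng
      rw [show ((n - g : ℕ):ℝ) * (-2/(n:ℝ)) = -(2 * ((n-g:ℕ):ℝ) / n) by ring]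
      rw [neg_le_neg_iff, le_div_iff₀ hnR]
      linarith
    calc (Bd : ℝ) = (n:ℝ)^g * ((n-2:ℕ):ℝ)^(n-g) := by rw [hBd]; push_cast; ring
      _ ≤ (n:ℝ)^g * ((n:ℝ) * Real.exp (-2/n))^(n-g) := by
          apply mul_le_mul_of_nonneg_left _ (by positivity)
          apply pow_le_pow_left₀ (by positivity)
          rw [hcast]; exact h1
      _ = (n:ℝ)^g * (n:ℝ)^(n-g) * Real.exp (-2/(n:ℝ))^(n-g) := by
          rw [mul_pow]; ring
      _ = (n:ℝ)^n * Real.exp (-2/(n:ℝ))^(n-g) := by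
          rw [← pow_add]
          congr 2
          omega
      _ ≤ (n:ℝ)^n * Real.exp (-1) :=
          mul_le_mul_of_nonneg_left hexp_le (by positivity)
      _ = Real.exp (-1) * (n:ℝ)^n := by ring
  -- combine
  have hsum_cast : ((∑ b : ZMod n → ZMod n, Rrow n b i : ℕ) : ℝ)
      = ∑ b : ZMod n → ZMod n, (Rrow n b i : ℝ) := by push_cast; rfl
  have hlhs : ((goodV.card * (n ^ n - Bd) : ℕ) : ℝ)
      = (goodV.card : ℝ) * ((n:ℝ)^n - (Bd:ℝ)) := by
    rw [Nat.cast_mul, Nat.cast_sub hBd_le]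
    push_cast
    ring
  have hcardV : (((n/2 : ℕ) : ℝ) - 1) ≤ (goodV.card : ℝ) := by
    have h1 : goodV.card = (n+1)/2 - 1 := by rw [hgoodV, Nat.card_Ico]
    have h2 : n/2 - 1 ≤ (n+1)/2 - 1 := by omega
    have h3 : ((n/2 - 1 : ℕ) : ℝ) = ((n/2 : ℕ) : ℝ) - 1 := by
      rw [Nat.cast_sub hm1]; norm_num
    rw [← h3, h1]
    exact_mod_cast le_trans h2 (le_refl _)
  have hfac2 : (n:ℝ)^n * (1 - Real.exp (-1)) ≤ (n:ℝ)^n - (Bd:ℝ) := by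
    nlinarith [hBd_real]
  have hfac2_nonneg : (0:ℝ) ≤ (n:ℝ)^n * (1 - Real.exp (-1)) := by
    apply mul_nonneg (by positivity)
    have : Real.exp (-1) ≤ 1 := by
      rw [show (1:ℝ) = Real.exp 0 by simp]
      exact Real.exp_le_exp.mpr (by norm_num)
    linarith
  have hm1R : (0:ℝ) ≤ ((n/2 : ℕ) : ℝ) - 1 := by
    have : (1:ℝ) ≤ ((n/2:ℕ):ℝ) := by exact_mod_cast hm1
    linarith
  calc (((n/2 : ℕ) : ℝ) - 1) * ((n:ℝ)^n * (1 - Real.exp (-1)))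
      ≤ (goodV.card : ℝ) * ((n:ℝ)^n - (Bd:ℝ)) := by
        apply mul_le_mul hcardV hfac2 hfac2_nonneg (by positivity)
    _ = ((goodV.card * (n ^ n - Bd) : ℕ) : ℝ) := hlhs.symm
    _ ≤ ((∑ b : ZMod n → ZMod n, Rrow n b i : ℕ) : ℝ) := by exact_mod_cast hnat
    _ = ∑ b : ZMod n → ZMod n, (Rrow n b i : ℝ) := hsum_cast

lemma Rrow_lip (n i : ℕ) [NeZero n] (b b' : ZMod n → ZMod n) (j₀ : ZMod n)
    (hbb : ∀ j, j ≠ j₀ → b j = b' j) :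
    (Rrow n b i : ℝ) - (Rrow n b' i : ℝ) ≤ 2 := by
  have hsub : (Finset.univ.image (fun j : ZMod n => Tb n b i j))
      ⊆ insert (Tb n b i j₀) (insert (Tb n b i (j₀ - (i : ZMod n)))
          (Finset.univ.image (fun j : ZMod n => Tb n b' i j))) := by
    intro x hx
    rw [Finset.mem_image] at hx
    obtain ⟨j, -, hj⟩ := hx
    by_cases h1 : j = j₀
    · subst h1; rw [← hj]; exact Finset.mem_insert_self _ _
    by_cases h2 : j = j₀ - (i : ZMod n)
    · subst h2; rw [← hj]
      exact Finset.mem_insert_of_mem (Finset.mem_insert_self _ _)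
    · apply Finset.mem_insert_of_mem
      apply Finset.mem_insert_of_mem
      rw [Finset.mem_image]
      refine ⟨j, Finset.mem_univ _, ?_⟩
      rw [← hj]
      unfold Tb
      rw [hbb j h1, hbb (j + (i : ZMod n)) (fun hc => h2 (by rw [← hc]; ring))]
  have hcard : Rrow n b i ≤ Rrow n b' i + 2 := by
    unfold Rrow
    calc (Finset.univ.image (fun j : ZMod n => Tb n b i j)).card
        ≤ (insert (Tb n b i j₀) (insert (Tb n b i (j₀ - (i : ZMod n)))
            (Finset.univ.image (fun j : ZMod n => Tb n b' i j)))).card :=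
          Finset.card_le_card hsub
      _ ≤ (insert (Tb n b i (j₀ - (i : ZMod n)))
            (Finset.univ.image (fun j : ZMod n => Tb n b' i j))).card + 1 :=
          Finset.card_insert_le _ _
      _ ≤ (Finset.univ.image (fun j : ZMod n => Tb n b' i j)).card + 1 + 1 :=
          Nat.add_le_add_right (Finset.card_insert_le _ _) 1
      _ = (Finset.univ.image (fun j : ZMod n => Tb n b' i j)).card + 2 := by omega
  have h2 : (Rrow n b i : ℝ) ≤ (Rrow n b' i : ℝ) + 2 := by exact_mod_cast hcard
  linarith

theorem prob_Rrow_small (n : ℕ) [NeZero n] (ε : ℝ) (hε : 0 < ε) (hn : (n : ℝ) > 2 / ε)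
    (i : ℕ) (hi1 : 1 ≤ i) (hi2 : i ≤ n / 2) :
    ((Finset.univ.filter
        (fun b : ZMod n → ZMod n =>
          (Rrow n b i : ℝ) < ((n / 2 : ℕ) : ℝ) * (1 - Real.exp (-1) - ε))).card : ℝ)
        / (n : ℝ) ^ n
      ≤ Real.exp (-(ε * ((n / 2 : ℕ) : ℝ) - 1) ^ 2 / (2 * n)) := by
  have hn0 : 0 < n := Nat.pos_of_ne_zero (NeZero.ne n)
  have hnR : (0:ℝ) < n := by exact_mod_cast hn0
  have hm1 : 1 ≤ n / 2 := le_trans hi1 hi2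
  set m : ℕ := n / 2 with hm
  set thr : ℝ := ((m : ℕ) : ℝ) * (1 - Real.exp (-1) - ε) with hthr_def
  by_cases hthr : thr ≤ 1
  · -- event is empty
    have hempty : (Finset.univ.filter
        (fun b : ZMod n → ZMod n => (Rrow n b i : ℝ) < thr)) = ∅ := by
      rw [Finset.filter_eq_empty_iff]
      intro b _
      push_neg
      have h1 : 1 ≤ Rrow n b i := by
        rw [Rrow]
        apply Finset.card_pos.mpr
        exact (Finset.univ_nonempty).image _
      have : (1:ℝ) ≤ (Rrow n b i : ℝ) := by exact_mod_cast h1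
      linarith
    rw [hempty]
    simp only [Finset.card_empty, Nat.cast_zero, zero_div]
    positivity
  · push_neg at hthr
    -- basic real facts
    have hεn : 2 < ε * n := by
      rw [gt_iff_lt, div_lt_iff₀ hε] at hn
      linarith
    have hmR : (n:ℝ) - 1 ≤ 2 * ((m:ℕ):ℝ) := by
      have h1 : n ≤ 2 * m + 1 := by omega
      have : (n:ℝ) ≤ 2 * ((m:ℕ):ℝ) + 1 := by exact_mod_cast h1
      linarith
    have hmRn : 2 * ((m:ℕ):ℝ) ≤ n := by
      have h1 : 2 * m ≤ n := by omega
      exact_mod_cast h1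
    have he1 : 0.36787944116 < Real.exp (-1) := Real.exp_neg_one_gt_d9
    have he2 : Real.exp (-1) < 0.3678794412 := Real.exp_neg_one_lt_d9
    have hm1R : (1:ℝ) ≤ ((m:ℕ):ℝ) := by exact_mod_cast hm1
    -- n ≥ 6
    have hn6 : 6 ≤ n := by
      by_contra hc
      push_neg at hc
      have hm2 : m ≤ 2 := by omega
      have hm2R : ((m:ℕ):ℝ) ≤ 2 := by exact_mod_cast hm2
      have hn5R : (n:ℝ) ≤ 5 := by exact_mod_cast (by omega : n ≤ 5)
      have hε25 : 2/5 < ε := by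
        rcases le_or_gt ε (2/5) with h | h
        · nlinarith
        · exact h
      have hq : 1 - Real.exp (-1) - ε < 0.24 := by nlinarith
      rcases le_or_gt (1 - Real.exp (-1) - ε) 0 with hc2 | hc2
      · have : thr ≤ 0 := mul_nonpos_of_nonneg_of_nonpos (by positivity) hc2
        linarith
      · have : thr ≤ 2 * 0.24 := by
          rw [hthr_def]
          apply le_trans (mul_le_mul hm2R (le_of_lt hq) (le_of_lt hc2) (by norm_num))
          norm_num
        linarith
    have hn6R : (6:ℝ) ≤ n := by exact_mod_cast hn6
    -- the deviation parameters
    set t : ℝ := ε * ((m:ℕ):ℝ) - 1 with ht_def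
    set s : ℝ := ε * ((m:ℕ):ℝ) - (1 - Real.exp (-1)) with hs_def
    have hεm : 1 - 1/(n:ℝ) < ε * ((m:ℕ):ℝ) := by
      have hε2n : 2/(n:ℝ) < ε := (div_lt_iff₀ hnR).mpr hεn
      have hhalf : ((n:ℝ) - 1)/2 ≤ ((m:ℕ):ℝ) := by linarith
      have hhpos : 0 < ((n:ℝ) - 1)/2 := by linarith
      have hident : (2/(n:ℝ)) * (((n:ℝ)-1)/2) = 1 - 1/(n:ℝ) := by field_simp
      calc 1 - 1/(n:ℝ) = (2/(n:ℝ)) * (((n:ℝ)-1)/2) := hident.symm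
        _ < ε * (((n:ℝ)-1)/2) := mul_lt_mul_of_pos_right hε2n hhpos
        _ ≤ ε * ((m:ℕ):ℝ) := mul_le_mul_of_nonneg_left hhalf hε.le
    have hs_t : t ≤ s := by rw [ht_def, hs_def]; linarith
    have hs_nt : -t ≤ s := by
      rw [ht_def, hs_def]
      have h1 : 1/(n:ℝ) ≤ 1/6 := by
        apply div_le_div_of_nonneg_left (by norm_num) (by norm_num) hn6R
      nlinarith
    have hs0 : 0 ≤ s := by
      rcases le_or_gt 0 t with h | h
      · linarith
      · linarith
    -- set up the function on Fin n → ZMod n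
    have hcardZ : Fintype.card (ZMod n) = n := ZMod.card n
    let eqv : ZMod n ≃ Fin n := Fintype.equivFinOfCardEq hcardZ
    set f : (Fin n → ZMod n) → ℝ :=
      fun x => (Rrow n (fun j => x (eqv j)) i : ℝ) with hf_def
    have hf_bd : ∀ (k : Fin n) (x y : Fin n → ZMod n),
        (∀ j, j ≠ k → x j = y j) → f x - f y ≤ 2 := by
      intro k x y hxy
      rw [hf_def]
      apply Rrow_lip n i _ _ (eqv.symm k)
      intro j hj
      apply hxy
      intro hc
      apply hj
      rw [← hc]
      simp
    -- sum transport
    have hsum_eq : ∑ x : Fin n → ZMod n, f x = ∑ b : ZMod n → ZMod n, (Rrow n b i : ℝ) := by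
      apply Fintype.sum_equiv (Equiv.arrowCongr eqv.symm (Equiv.refl (ZMod n)))
      intro x
      rw [hf_def]
      congr 1
    -- mean lower bound
    set μ : ℝ := (∑ z : Fin n → ZMod n, f z) / (Fintype.card (ZMod n) : ℝ) ^ n with hμ_def
    have hμ_lb : (((m:ℕ):ℝ) - 1) * (1 - Real.exp (-1)) ≤ μ := by
      rw [hμ_def, hsum_eq, hcardZ]
      rw [le_div_iff₀ (by positivity)]
      have := Rrow_sum_lb n i hi1 hi2
      calc (((m:ℕ):ℝ) - 1) * (1 - Real.exp (-1)) * (n:ℝ)^n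
          = (((n/2 : ℕ) : ℝ) - 1) * ((n:ℝ)^n * (1 - Real.exp (-1))) := by rw [← hm]; ring
        _ ≤ ∑ b : ZMod n → ZMod n, (Rrow n b i : ℝ) := this
    -- thr = mean lower bound - s
    have hthr_s : thr = (((m:ℕ):ℝ) - 1) * (1 - Real.exp (-1)) - s := by
      rw [hthr_def, hs_def]; ring
    -- event inclusion and card transport
    have hcard_eq : (Finset.univ.filter
          (fun b : ZMod n → ZMod n => (Rrow n b i : ℝ) < thr)).card
        = (Finset.univ.filter (fun x : Fin n → ZMod n => f x < thr)).card := by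
      rw [← Fintype.card_subtype, ← Fintype.card_subtype]
      apply Fintype.card_congr
      apply Equiv.subtypeEquiv (Equiv.arrowCongr eqv (Equiv.refl (ZMod n)))
      intro b
      rw [hf_def]
      constructor
      · intro h
        convert h using 3
        · funext j; simp [Equiv.arrowCongr]
      · intro h
        convert h using 3
        · funext j; simp [Equiv.arrowCongr]
    have hsubset : (Finset.univ.filter (fun x : Fin n → ZMod n => f x < thr))
        ⊆ (Finset.univ.filter (fun x : Fin n → ZMod n => f x ≤ μ - s)) := by
      apply Finset.monotone_filter_right
      intro x _ hx
      have : thr ≤ μ - s := by rw [hthr_s]; linarith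
      linarith
    -- apply McDiarmid
    have hmcd := mcdiarmid_tail (A := ZMod n) n hn0 f hf_bd s hs0
    rw [← hμ_def] at hmcd
    have hfinal : ((Finset.univ.filter
          (fun b : ZMod n → ZMod n => (Rrow n b i : ℝ) < thr)).card : ℝ)
        ≤ (n:ℝ)^n * Real.exp (-s^2/(2*n)) := by
      rw [hcard_eq]
      calc ((Finset.univ.filter (fun x : Fin n → ZMod n => f x < thr)).card : ℝ)
          ≤ ((Finset.univ.filter (fun x : Fin n → ZMod n => f x ≤ μ - s)).card : ℝ) := by
            exact_mod_cast Finset.card_le_card hsubset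
        _ ≤ (Fintype.card (ZMod n) : ℝ) ^ n * Real.exp (-s ^ 2 / (2 * n)) := hmcd
        _ = (n:ℝ)^n * Real.exp (-s^2/(2*n)) := by rw [hcardZ]
    have hexp_le : Real.exp (-s^2/(2*(n:ℝ))) ≤ Real.exp (-t^2/(2*(n:ℝ))) := by
      apply Real.exp_le_exp.mpr
      have ht2 : t^2 ≤ s^2 := sq_le_sq' (by linarith) hs_t
      apply (div_le_div_iff_of_pos_right (by positivity : (0:ℝ) < 2*(n:ℝ))).mpr
      linarith
    rw [div_le_iff₀ (by positivity : (0:ℝ) < (n:ℝ)^n)]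
    calc ((Finset.univ.filter
          (fun b : ZMod n → ZMod n => (Rrow n b i : ℝ) < thr)).card : ℝ)
        ≤ (n:ℝ)^n * Real.exp (-s^2/(2*(n:ℝ))) := hfinal
      _ ≤ (n:ℝ)^n * Real.exp (-t^2/(2*(n:ℝ))) :=
          mul_le_mul_of_nonneg_left hexp_le (by positivity)
      _ = Real.exp (-t^2/(2*(n:ℝ))) * (n:ℝ)^n := by ring
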